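/- Let s₁, s₂, t₁, t₂ ∈ ℕ^r be vectors with s₁ + s₂ = t₁ + t₂ = v. If (s₁, s₂) ≠ (t₁, t₂), then the decreasing rearrangement of s₁ + t₂ is strictly greater than the decreasing rearrangement of v in lexicographic order, or the decreasing rearrangement of t₁ + s₂ is strictly greater than the decreasing rearrangement of v in lexicographic order. -/

import Mathlib

/-- The decreasing rearrangement `w↓` of a vector `w ∈ ℕ^r`: sort the entries of `w` in
decreasing order. (`Tuple.sort` sorts increasingly, so we reverse the index.) -/
def decRearrange {r : ℕ} (w : Fin r → ℕ) : Fin r → ℕ :=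
  fun i => (w ∘ Tuple.sort w) i.rev

/-- The counting function: number of indices with value at least `x`. -/
def cnt {r : ℕ} (w : Fin r → ℕ) (x : ℕ) : ℕ :=
  (Finset.univ.filter fun i => x ≤ w i).card

lemma decRearrange_antitone {r : ℕ} (w : Fin r → ℕ) : Antitone (decRearrange w) := by
  intro i j hij
  exact Tuple.monotone_sort w (by simpa [Fin.rev_le_rev] using hij)

lemma cnt_decRearrange {r : ℕ} (w : Fin r → ℕ) (x : ℕ) :
    cnt (decRearrange w) x = cnt w x := by
  unfold cnt
  apply Finset.card_bij (fun i _ => Tuple.sort w i.rev)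
  · intro i hi
    simp only [Finset.mem_filter, Finset.mem_univ, true_and] at hi ⊢
    exact hi
  · intro i hi j hj hij
    have := (Tuple.sort w).injective hij
    exact Fin.rev_injective this
  · intro j hj
    refine ⟨((Tuple.sort w).symm j).rev, ?_, ?_⟩
    · exact Finset.mem_filter.2 ⟨Finset.mem_univ _, by simpa [decRearrange] using (Finset.mem_filter.1 hj).2⟩
    · simp

lemma cnt_lt_of_mem {r : ℕ} {q : Fin r → ℕ} (hq : Antitone q) {x : ℕ} {i : Fin r}
    (h : x ≤ q i) : (i : ℕ) < cnt q x := by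
  have hsub : Finset.Iic i ⊆ Finset.univ.filter fun j => x ≤ q j := by
    intro j hj
    simp only [Finset.mem_Iic] at hj
    simp only [Finset.mem_filter, Finset.mem_univ, true_and]
    exact le_trans h (hq hj)
  calc (i : ℕ) < (i : ℕ) + 1 := Nat.lt_succ_self _
    _ = (Finset.Iic i).card := (Fin.card_Iic i).symm
    _ ≤ cnt q x := Finset.card_le_card hsub

lemma le_of_lt_cnt {r : ℕ} {q : Fin r → ℕ} (hq : Antitone q) {x : ℕ} {i : Fin r}
    (h : (i : ℕ) < cnt q x) : x ≤ q i := by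
  by_contra hx
  push_neg at hx
  have hsub : (Finset.univ.filter fun j => x ≤ q j) ⊆ Finset.Iio i := by
    intro j hj
    simp only [Finset.mem_filter, Finset.mem_univ, true_and] at hj
    simp only [Finset.mem_Iio]
    by_contra hji
    push_neg at hji
    exact absurd (le_trans hj (hq hji)) (not_le.2 hx)
  have h2 : cnt q x ≤ (i : ℕ) := by
    unfold cnt
    calc (Finset.univ.filter fun j => x ≤ q j).card ≤ (Finset.Iio i).card :=
          Finset.card_le_card hsub
      _ = (i : ℕ) := Fin.card_Iio i
  omega

/-- Key characterization (one direction): if the counting functions agree above `x` and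
`p` has strictly fewer entries `≥ x` than `q`, then `p < q` lexicographically
(for antitone `p`, `q`). -/
lemma lex_lt_of_cnt {r : ℕ} {p q : Fin r → ℕ} (hp : Antitone p) (hq : Antitone q)
    (x : ℕ) (hagree : ∀ y, x < y → cnt p y = cnt q y) (hx : cnt p x < cnt q x) :
    toLex p < toLex q := by
  have hkr : cnt p x < r := by
    have : cnt q x ≤ r := by
      have h := Finset.card_filter_le (Finset.univ : Finset (Fin r)) (fun i => x ≤ q i)
      simpa [cnt] using h
    omega
  set k : Fin r := ⟨cnt p x, hkr⟩ with hk
  have hpk : ¬ x ≤ p k := by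
    intro h
    have := cnt_lt_of_mem hp h
    simp [hk] at this
  have hqk : x ≤ q k := le_of_lt_cnt hq (by simp [hk]; exact hx)
  have hlt : p k < q k := by omega
  have hcols : ∀ j : Fin r, j < k → p j = q j := by
    intro j hj
    have hjk : (j : ℕ) < cnt p x := hj
    have hpj : x ≤ p j := le_of_lt_cnt hp hjk
    have hqj : x ≤ q j := le_of_lt_cnt hq (by omega)
    rcases lt_trichotomy (p j) (q j) with h | h | h
    · exfalso
      have hy : x < q j := lt_of_le_of_lt hpj h
      have hcq : (j : ℕ) < cnt q (q j) := cnt_lt_of_mem hq le_rfl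
      rw [← hagree _ hy] at hcq
      exact absurd (le_of_lt_cnt hp hcq) (not_le.2 h)
    · exact h
    · exfalso
      have hy : x < p j := lt_of_le_of_lt hqj h
      have hcp : (j : ℕ) < cnt p (p j) := cnt_lt_of_mem hp le_rfl
      rw [hagree _ hy] at hcp
      exact absurd (le_of_lt_cnt hq hcp) (not_le.2 h)
  exact ⟨k, hcols, hlt⟩

/-- The combinatorial core: if `a i + b i = 2 * v i` pointwise and the counting
inequalities hold at every level, then `a = v`. -/
lemma core {r : ℕ} (a b v : Fin r → ℕ) (hab : ∀ i, a i + b i = 2 * v i)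
    (HA : ∀ x, (∀ y, x < y → cnt v y = cnt a y) → cnt a x ≤ cnt v x)
    (HB : ∀ x, (∀ y, x < y → cnt v y = cnt b y) → cnt b x ≤ cnt v x) :
    a = v := by
  classical
  set B : ℕ := (Finset.univ.sup v + Finset.univ.sup a + Finset.univ.sup b) + 1 with hB
  have hva : ∀ i, v i < B ∧ a i < B ∧ b i < B := by
    intro i
    have h1 : v i ≤ Finset.univ.sup v := Finset.le_sup (Finset.mem_univ i)
    have h2 : a i ≤ Finset.univ.sup a := Finset.le_sup (Finset.mem_univ i)
    have h3 : b i ≤ Finset.univ.sup b := Finset.le_sup (Finset.mem_univ i)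
    omega
  -- key downward induction
  have key : ∀ d y, B ≤ y + d →
      (cnt a y = cnt v y ∧ cnt b y = cnt v y) ∧
      (∀ i, (y ≤ a i ↔ y ≤ v i) ∧ (y ≤ b i ↔ y ≤ v i) ∧
        (y ≤ v i → a i = v i ∧ b i = v i)) := by
    intro d
    induction d with
    | zero =>
      intro y hy
      simp only [Nat.add_zero] at hy
      constructor
      · constructor <;>
        · unfold cnt
          congr 1
          apply Finset.filter_congr
          intro i _
          have := hva i
          omega
      · intro i
        have := hva i
        refine ⟨by omega, by omega, fun h => by omega⟩
    | succ d ih =>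
      intro y hy
      -- IH holds for all levels > y
      have IH : ∀ z, y < z →
          (cnt a z = cnt v z ∧ cnt b z = cnt v z) ∧
          (∀ i, (z ≤ a i ↔ z ≤ v i) ∧ (z ≤ b i ↔ z ≤ v i) ∧
            (z ≤ v i → a i = v i ∧ b i = v i)) := by
        intro z hz
        exact ih z (by omega)
      -- (i) pointwise equalities at level y
      have step1 : ∀ i, y ≤ v i → a i = v i ∧ b i = v i := by
        intro i hi
        rcases eq_or_lt_of_le hi with h | h
        · -- v i = y
          have ha : a i ≤ v i := by
            by_contra hc
            push_neg at hc
            have := ((IH (a i) (by omega)).2 i).1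
            have : a i ≤ v i := this.1 le_rfl
            omega
          have hb : b i ≤ v i := by
            by_contra hc
            push_neg at hc
            have := ((IH (b i) (by omega)).2 i).2.1
            have : b i ≤ v i := this.1 le_rfl
            omega
          have := hab i
          omega
        · exact ((IH (v i) h).2 i).2.2 le_rfl
      -- subset: {v ≥ y} ⊆ {a ≥ y}
      have hsubA : (Finset.univ.filter fun i => y ≤ v i) ⊆
          (Finset.univ.filter fun i => y ≤ a i) := by
        intro i hi
        simp only [Finset.mem_filter, Finset.mem_univ, true_and] at hi ⊢
        have := step1 i hi
        omega
      have hsubB : (Finset.univ.filter fun i => y ≤ v i) ⊆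
          (Finset.univ.filter fun i => y ≤ b i) := by
        intro i hi
        simp only [Finset.mem_filter, Finset.mem_univ, true_and] at hi ⊢
        have := step1 i hi
        omega
      have hcA : cnt a y ≤ cnt v y := HA y fun z hz => ((IH z hz).1.1).symm
      have hcB : cnt b y ≤ cnt v y := HB y fun z hz => ((IH z hz).1.2).symm
      have hsetA : (Finset.univ.filter fun i => y ≤ a i) =
          (Finset.univ.filter fun i => y ≤ v i) :=
        (Finset.eq_of_subset_of_card_le hsubA hcA).symm
      have hsetB : (Finset.univ.filter fun i => y ≤ b i) =
          (Finset.univ.filter fun i => y ≤ v i) :=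
        (Finset.eq_of_subset_of_card_le hsubB hcB).symm
      have hiffA : ∀ i, y ≤ a i ↔ y ≤ v i := by
        intro i
        have := Finset.ext_iff.1 hsetA i
        simpa using this
      have hiffB : ∀ i, y ≤ b i ↔ y ≤ v i := by
        intro i
        have := Finset.ext_iff.1 hsetB i
        simpa using this
      refine ⟨⟨by unfold cnt; rw [hsetA], by unfold cnt; rw [hsetB]⟩, ?_⟩
      intro i
      exact ⟨hiffA i, hiffB i, step1 i⟩
  -- conclude a = v
  funext i
  rcases Nat.eq_zero_or_pos (v i) with h0 | h0
  · have h1 := ((key B 1 (by omega)).2 i).1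
    have := hab i
    omega
  · exact (((key B 1 (by omega)).2 i).2.2 (by omega)).1

theorem stmt6 {r : ℕ} (s₁ s₂ t₁ t₂ v : Fin r → ℕ)
    (h1 : s₁ + s₂ = v) (h2 : t₁ + t₂ = v) (hne : (s₁, s₂) ≠ (t₁, t₂)) :
    toLex (decRearrange v) < toLex (decRearrange (s₁ + t₂)) ∨
    toLex (decRearrange v) < toLex (decRearrange (t₁ + s₂)) := by
  by_contra hcon
  have hA : ¬ toLex (decRearrange v) < toLex (decRearrange (s₁ + t₂)) :=
    fun h => hcon (Or.inl h)
  have hB : ¬ toLex (decRearrange v) < toLex (decRearrange (t₁ + s₂)) :=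
    fun h => hcon (Or.inr h)
  set a : Fin r → ℕ := s₁ + t₂ with ha
  set b : Fin r → ℕ := t₁ + s₂ with hb
  have hab : ∀ i, a i + b i = 2 * v i := by
    intro i
    have e1 : s₁ i + s₂ i = v i := congrFun h1 i
    have e2 : t₁ i + t₂ i = v i := congrFun h2 i
    simp only [ha, hb, Pi.add_apply]
    omega
  have hst : s₁ ≠ t₁ := by
    intro h
    apply hne
    have : s₂ = t₂ := by
      funext i
      have e1 : s₁ i + s₂ i = v i := congrFun h1 i
      have e2 : t₁ i + t₂ i = v i := congrFun h2 i
      have := congrFun h i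
      omega
    rw [h, this]
  have hane : a ≠ v := by
    intro h
    apply hst
    funext i
    have e2 : t₁ i + t₂ i = v i := congrFun h2 i
    have := congrFun h i
    simp only [ha, Pi.add_apply] at this
    omega
  have HA : ∀ x, (∀ y, x < y → cnt v y = cnt a y) → cnt a x ≤ cnt v x := by
    intro x hx
    by_contra h
    push_neg at h
    have := lex_lt_of_cnt (decRearrange_antitone v) (decRearrange_antitone a) x
      (fun y hy => by rw [cnt_decRearrange, cnt_decRearrange]; exact hx y hy)
      (by rw [cnt_decRearrange, cnt_decRearrange]; exact h)
    exact hA this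
  have HB : ∀ x, (∀ y, x < y → cnt v y = cnt b y) → cnt b x ≤ cnt v x := by
    intro x hx
    by_contra h
    push_neg at h
    have := lex_lt_of_cnt (decRearrange_antitone v) (decRearrange_antitone b) x
      (fun y hy => by rw [cnt_decRearrange, cnt_decRearrange]; exact hx y hy)
      (by rw [cnt_decRearrange, cnt_decRearrange]; exact h)
    exact hB this
  exact hane (core a b v hab HA HB)
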